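/- Let n ∈ ℕ₀, let T ∈ 𝕽 with h_T = n, and let G ∈ 𝔗_a^{=n}. Then for every ρ ∈ 𝓢(G,T): 𝓢(G,T) = 𝓙^{𝓛(G)}_{G,T}(ρ). -/

import Mathlib

/-- A finite digraph: a finite nonempty vertex set `V ⊆ ℕ` together with an
arc set `A ⊆ V × V`. -/
structure Dgraph where
  V : Finset ℕ
  nonempty : V.Nonempty
  A : Finset (ℕ × ℕ)
  A_sub : ∀ p ∈ A, p.1 ∈ V ∧ p.2 ∈ V

namespace Dgraph

/-- The set of proper arcs of `G`, i.e. the arc set of `G*`. -/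
def Astar (G : Dgraph) : Finset (ℕ × ℕ) := G.A.filter (fun p => p.1 ≠ p.2)

/-- `G` is reflexive. -/
def IsRefl (G : Dgraph) : Prop := ∀ v ∈ G.V, (v, v) ∈ G.A

/-- `p` is a path in `G` (a nonempty list of pairwise distinct vertices,
consecutive ones joined by arcs).  Its length as a path is `p.length - 1`. -/
def IsPath (G : Dgraph) (p : List ℕ) : Prop :=
  p ≠ [] ∧ p.Nodup ∧ (∀ v ∈ p, v ∈ G.V) ∧ p.Chain' (fun v w => (v, w) ∈ G.A)

/-- `p` is a path in `G*`. -/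
def IsPathStar (G : Dgraph) (p : List ℕ) : Prop :=
  p ≠ [] ∧ p.Nodup ∧ (∀ v ∈ p, v ∈ G.V) ∧ p.Chain' (fun v w => (v, w) ∈ G.A ∧ v ≠ w)

/-- `G*` contains a closed walk. -/
def HasClosedWalkStar (G : Dgraph) : Prop :=
  ∃ p : List ℕ, (∀ v ∈ p, v ∈ G.V) ∧ p.Chain' (fun v w => (v, w) ∈ G.A ∧ v ≠ w) ∧
    2 ≤ p.length ∧ p.head? = p.getLast?

/-- membership in the class `𝔗ₐ`: `G*` is acyclic. -/
def MemTa (G : Dgraph) : Prop := ¬ G.HasClosedWalkStar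

/-- The height of `G`: the maximal length of a path in `G`. -/
noncomputable def height (G : Dgraph) : ℕ :=
  sSup {n | ∃ p, G.IsPath p ∧ p.length = n + 1}

/-- The interval `[v,w]_G`. -/
def interval (G : Dgraph) (v w : ℕ) : Finset ℕ :=
  G.V.filter (fun z => (v, z) ∈ G.A ∧ (z, w) ∈ G.A)

/-- `ι(v,w)_G`, the cardinality of the interval `[v,w]_G`. -/
def iota (G : Dgraph) (v w : ℕ) : ℕ := (G.interval v w).card

/-- The set `𝓗(G,H)` of homomorphisms from `G` to `H` (represented as total
maps `ℕ → ℕ`, normalized to `0` outside of `V(G)`). -/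
def Hom (G H : Dgraph) : Set (ℕ → ℕ) :=
  {f | (∀ v ∈ G.V, f v ∈ H.V) ∧ (∀ p ∈ G.A, (f p.1, f p.2) ∈ H.A) ∧
    ∀ v, v ∉ G.V → f v = 0}

/-- The set `𝓢(G,H)` of strict homomorphisms from `G` to `H`. -/
def SHom (G H : Dgraph) : Set (ℕ → ℕ) :=
  {f ∈ Hom G H | ∀ p ∈ G.Astar, f p.1 ≠ f p.2}

/-- `μ_ξ(G)`, for a homomorphism `ξ` from `G` into `H`. -/
def mu (G H : Dgraph) (f : ℕ → ℕ) : ℕ :=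
  ∑ p ∈ G.Astar, H.iota (f p.1) (f p.2)

/-- `L` is a subgraph of `G`. -/
def Subgraph (L G : Dgraph) : Prop := L.V ⊆ G.V ∧ L.A ⊆ G.A

/-- Restriction of a map to a vertex set (normalized to `0` outside). -/
def restrict (X : Finset ℕ) (f : ℕ → ℕ) : ℕ → ℕ := fun x => if x ∈ X then f x else 0

/-- `𝓜(L,H)`: homomorphisms from `L` to `H` with maximal `μ`. -/
def MSet (L H : Dgraph) : Set (ℕ → ℕ) :=
  {f ∈ Hom L H | ∀ g ∈ Hom L H, mu L H g ≤ mu L H f}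

/-- `𝓜^𝓛(G,H)`. -/
def MLSet (G H : Dgraph) (𝓛 : Set Dgraph) : Set (ℕ → ℕ) :=
  {f ∈ Hom G H | ∀ L ∈ 𝓛, restrict L.V f ∈ MSet L H}

/-- `𝓙^𝓛_{G,H'}(ξ)` for `ξ ∈ 𝓗(G,H)`. -/
def JSet (G H H' : Dgraph) (𝓛 : Set Dgraph) (ξ : ℕ → ℕ) : Set (ℕ → ℕ) :=
  {ζ ∈ Hom G H' | ∀ L ∈ 𝓛, ∀ p ∈ L.Astar,
    H'.iota (ζ p.1) (ζ p.2) = H.iota (ξ p.1) (ξ p.2)}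

/-- The digraph `P_×` of a path `P = P_0, …, P_ℓ`: vertex set `{P_0,…,P_ℓ}`
and arcs `P_{i-1}P_i`. -/
def pathGraph (P : List ℕ) (h : P ≠ []) : Dgraph where
  V := P.toFinset
  nonempty := by
    obtain ⟨a, t, rfl⟩ := List.exists_cons_of_ne_nil h
    exact ⟨a, by simp⟩
  A := (P.zip P.tail).toFinset
  A_sub := by
    intro p hp
    rw [List.mem_toFinset] at hp
    have h1 := List.of_mem_zip hp
    exact ⟨List.mem_toFinset.mpr h1.1, List.mem_toFinset.mpr (List.mem_of_mem_tail h1.2)⟩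

/-- `𝓛(G)`: the set of the digraphs `P_×` for the paths `P` of length `h_G` in `G`. -/
def LSet (G : Dgraph) : Set Dgraph :=
  {D | ∃ (P : List ℕ) (h : P ≠ []), G.IsPath P ∧ P.length = G.height + 1 ∧
    D = pathGraph P h}

/-- The class `𝕽`: reflexive digraphs `R ∈ 𝔗ₐ` with
`𝓜^{𝓛(R)}(R,R) ∩ 𝓢(R,R) ≠ ∅`. -/
def MemR (R : Dgraph) : Prop :=
  R.MemTa ∧ R.IsRefl ∧ (MLSet R R (LSet R) ∩ SHom R R).Nonempty

/-- `G` is a poset: reflexive, antisymmetric and transitive. -/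
def IsPoset (G : Dgraph) : Prop :=
  G.IsRefl ∧ (∀ v w, (v, w) ∈ G.A → (w, v) ∈ G.A → v = w) ∧
    (∀ u v w, (u, v) ∈ G.A → (v, w) ∈ G.A → (u, w) ∈ G.A)

/-- The class `𝔗ₐ^{=n}`: digraphs in `𝔗ₐ` of height `n` in which every vertex
lies on a path of length `n`. -/
def MemTaEq (n : ℕ) (G : Dgraph) : Prop :=
  G.MemTa ∧ G.height = n ∧ ∀ v ∈ G.V, ∃ p, G.IsPath p ∧ p.length = n + 1 ∧ v ∈ p

/-- A maximal path in `G`: no path in `G` properly contains its vertex set. -/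
def MaximalPath (G : Dgraph) (P : List ℕ) : Prop :=
  G.IsPath P ∧ ∀ Q, G.IsPath Q → (∀ v ∈ P, v ∈ Q) → ∀ v ∈ Q, v ∈ P

end Dgraph

open Dgraph

set_option linter.deprecated false in
theorem List.chain'_cons {R : ℕ → ℕ → Prop} {a b : ℕ} {l : List ℕ} :
    List.Chain' R (a :: b :: l) ↔ R a b ∧ List.Chain' R (b :: l) :=
  List.isChain_cons_cons

set_option linter.deprecated false in
theorem List.chain'_singleton {R : ℕ → ℕ → Prop} (a : ℕ) : List.Chain' R [a] :=
  List.isChain_singleton a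

set_option linter.deprecated false in
theorem List.chain'_append {R : ℕ → ℕ → Prop} {l₁ l₂ : List ℕ} :
    List.Chain' R (l₁ ++ l₂) ↔ List.Chain' R l₁ ∧ List.Chain' R l₂ ∧
      ∀ x ∈ l₁.getLast?, ∀ y ∈ l₂.head?, R x y :=
  List.isChain_append

set_option linter.deprecated false in
theorem List.chain'_map {R : ℕ → ℕ → Prop} (f : ℕ → ℕ) {l : List ℕ} :
    List.Chain' R (l.map f) ↔ List.Chain' (fun a b => R (f a) (f b)) l :=
  List.isChain_map f

section Aux

open List

/-- The arc relation of `D*`. -/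
def dstar (D : Dgraph) (v w : ℕ) : Prop := (v, w) ∈ D.A ∧ v ≠ w

lemma zip_tail_split {l : List ℕ} {x y : ℕ} (h : (x, y) ∈ l.zip l.tail) :
    ∃ s t, l = s ++ x :: y :: t := by
  induction l with
  | nil => simp at h
  | cons a l ih =>
    cases l with
    | nil => simp at h
    | cons b t =>
      simp only [List.tail_cons, List.zip_cons_cons, List.mem_cons, Prod.mk.injEq] at h
      rcases h with ⟨rfl, rfl⟩ | h
      · exact ⟨[], t, rfl⟩
      · obtain ⟨s, t', heq⟩ := ih h
        exact ⟨a :: s, t', by rw [List.cons_append, ← heq]⟩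

lemma mem_zip_cons {x y a : ℕ} {L : List ℕ} (h : (x, y) ∈ L.zip L.tail) :
    (x, y) ∈ (a :: L).zip L := by
  cases L with
  | nil => simp at h
  | cons c L' =>
    simp only [List.zip_cons_cons, List.mem_cons]
    right
    exact h

lemma split_mem_zip (s t : List ℕ) (x y : ℕ) :
    (x, y) ∈ (s ++ x :: y :: t).zip (s ++ x :: y :: t).tail := by
  induction s with
  | nil => simp
  | cons a s ih => exact mem_zip_cons ih

lemma chain'_iff_zip {R : ℕ → ℕ → Prop} : ∀ {l : List ℕ},
    l.Chain' R ↔ ∀ x y, (x, y) ∈ l.zip l.tail → R x y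
  | [] => by simp [List.Chain']
  | [a] => by simp [List.Chain']
  | a :: b :: t => by
    rw [List.chain'_cons, chain'_iff_zip (l := b :: t)]
    simp only [List.tail_cons, List.zip_cons_cons, List.mem_cons, Prod.mk.injEq]
    constructor
    · rintro ⟨hab, h⟩ x y (⟨rfl, rfl⟩ | h')
      · exact hab
      · exact h x y h'
    · intro h
      exact ⟨h a b (Or.inl ⟨rfl, rfl⟩), fun x y h' => h x y (Or.inr h')⟩

lemma walk_nodup {D : Dgraph} (hD : D.MemTa) : ∀ {p : List ℕ},
    (∀ v ∈ p, v ∈ D.V) → p.Chain' (dstar D) → p.Nodup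
  | [], _, _ => List.nodup_nil
  | a :: l, hV, hc => by
    have ih := walk_nodup hD (fun v hv => hV v (List.mem_cons_of_mem a hv)) hc.tail
    refine List.nodup_cons.mpr ⟨?_, ih⟩
    intro hmem
    obtain ⟨s, t, rfl⟩ := List.append_of_mem hmem
    apply hD
    refine ⟨(a :: s) ++ [a], ?_, ?_, by simp, by rw [List.getLast?_concat]; rfl⟩
    · intro v hv
      apply hV
      simp only [List.mem_append, List.mem_cons, List.mem_singleton] at hv ⊢
      tauto
    · refine (hc.prefix ?_ : _)
      exact ⟨t, by simp⟩

lemma walk_le {D : Dgraph} (hD : D.MemTa) {p : List ℕ}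
    (hV : ∀ v ∈ p, v ∈ D.V) (hc : p.Chain' (dstar D)) : p.length ≤ D.height + 1 := by
  by_cases hne : p = []
  · simp [hne]
  · have hnd := walk_nodup hD hV hc
    have hpath : D.IsPath p := ⟨hne, hnd, hV, hc.imp fun a b h => h.1⟩
    have h1 : 1 ≤ p.length := List.length_pos_iff.mpr hne
    have hmem : p.length - 1 ∈ {m | ∃ q, D.IsPath q ∧ q.length = m + 1} :=
      ⟨p, hpath, by omega⟩
    have hbdd : BddAbove {m | ∃ q, D.IsPath q ∧ q.length = m + 1} := by
      refine ⟨D.V.card, fun m hm => ?_⟩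
      obtain ⟨q, hq, hlen⟩ := hm
      have h1 : q.toFinset ⊆ D.V := fun v hv => hq.2.2.1 v (List.mem_toFinset.mp hv)
      have h2 : q.toFinset.card = q.length := List.toFinset_card_of_nodup hq.2.1
      have := Finset.card_le_card h1
      omega
    have hle : p.length - 1 ≤ D.height := le_csSup hbdd hmem
    omega

lemma path_chain'_star {D : Dgraph} {p : List ℕ} (hp : D.IsPath p) :
    p.Chain' (dstar D) := by
  rw [chain'_iff_zip]
  intro x y hxy
  refine ⟨chain'_iff_zip.mp hp.2.2.2 x y hxy, ?_⟩
  obtain ⟨s, t, heq⟩ := zip_tail_split hxy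
  have hnd := hp.2.1
  rw [heq, List.nodup_append] at hnd
  have h2 := hnd.2.1
  rw [List.nodup_cons] at h2
  intro hxy'
  exact h2.1 (hxy' ▸ List.mem_cons_self)

lemma iota_self_le {T : Dgraph} (hTa : T.MemTa) (u : ℕ) : T.iota u u ≤ 1 := by
  have hsub : T.interval u u ⊆ {u} := by
    intro z hz
    rw [Dgraph.interval, Finset.mem_filter] at hz
    obtain ⟨hzV, huz, hzu⟩ := hz
    simp only [Finset.mem_singleton]
    by_contra hzu'
    apply hTa
    have huV : u ∈ T.V := (T.A_sub _ huz).1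
    refine ⟨[u, z, u], ?_, ?_, by simp, by simp⟩
    · intro v hv
      simp only [List.mem_cons, List.not_mem_nil, or_false] at hv
      rcases hv with rfl | rfl | rfl <;> assumption
    · exact List.chain'_cons.mpr ⟨⟨huz, fun h => hzu' h.symm⟩,
        List.chain'_cons.mpr ⟨⟨hzu, hzu'⟩, List.chain'_singleton u⟩⟩
  calc T.iota u u ≤ ({u} : Finset ℕ).card := Finset.card_le_card hsub
    _ = 1 := Finset.card_singleton u

lemma key_iota {T : Dgraph} (hTa : T.MemTa) (hrefl : T.IsRefl) {n : ℕ} (hh : T.height = n)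
    {Q : List ℕ} (hQV : ∀ v ∈ Q, v ∈ T.V) (hQc : Q.Chain' (dstar T))
    (hlen : Q.length = n + 1) {a b : ℕ} (hab : (a, b) ∈ Q.zip Q.tail) :
    T.iota a b = 2 := by
  have hstar : dstar T a b := chain'_iff_zip.mp hQc a b hab
  obtain ⟨s, t, rfl⟩ := zip_tail_split hab
  have haV : a ∈ T.V := hQV a (by simp)
  have hbV : b ∈ T.V := hQV b (by simp)
  have hsub : T.interval a b = ({a, b} : Finset ℕ) := by
    apply Finset.Subset.antisymm
    · intro z hz
      rw [Dgraph.interval, Finset.mem_filter] at hz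
      obtain ⟨hzV, haz, hzb⟩ := hz
      by_contra hzn
      simp only [Finset.mem_insert, Finset.mem_singleton] at hzn
      push_neg at hzn
      rw [List.chain'_append] at hQc
      obtain ⟨hs, habt, hjun⟩ := hQc
      rw [List.chain'_cons] at habt
      have hwalk : (s ++ a :: z :: b :: t).Chain' (dstar T) := by
        rw [List.chain'_append]
        refine ⟨hs, ?_, ?_⟩
        · exact List.chain'_cons.mpr ⟨⟨haz, fun h => hzn.1 h.symm⟩,
            List.chain'_cons.mpr ⟨⟨hzb, hzn.2⟩, habt.2⟩⟩
        · intro x hx y hy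
          simp only [List.head?_cons, Option.mem_some_iff] at hy
          subst hy
          exact hjun x hx a (by simp)
      have hV' : ∀ v ∈ s ++ a :: z :: b :: t, v ∈ T.V := by
        intro v hv
        simp only [List.mem_append, List.mem_cons] at hv
        rcases hv with h | rfl | rfl | rfl | h
        · exact hQV v (by simp [h])
        · exact haV
        · exact hzV
        · exact hbV
        · exact hQV v (by simp [h])
      have hle := walk_le hTa hV' hwalk
      rw [hh] at hle
      simp only [List.length_append, List.length_cons] at hle hlen
      omega
    · intro z hz
      simp only [Finset.mem_insert, Finset.mem_singleton] at hz
      rw [Dgraph.interval, Finset.mem_filter]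
      rcases hz with rfl | rfl
      · exact ⟨haV, hrefl z haV, hstar.1⟩
      · exact ⟨hbV, hstar.1, hrefl z hbV⟩
  rw [Dgraph.iota, hsub]
  exact Finset.card_pair hstar.2

lemma zip_tail_map {f : ℕ → ℕ} {l : List ℕ} {x y : ℕ} (h : (x, y) ∈ l.zip l.tail) :
    (f x, f y) ∈ (l.map f).zip (l.map f).tail := by
  obtain ⟨s, t, rfl⟩ := zip_tail_split h
  have heq : (s ++ x :: y :: t).map f = s.map f ++ f x :: f y :: t.map f := by simp
  rw [heq]
  exact split_mem_zip _ _ _ _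

lemma shom_map_chain' {G T : Dgraph} {ξ : ℕ → ℕ} (hξ : ξ ∈ SHom G T)
    {P : List ℕ} (hP : G.IsPath P) : (P.map ξ).Chain' (dstar T) := by
  rw [List.chain'_map]
  refine (path_chain'_star hP).imp fun a b hab => ?_
  have hA : (a, b) ∈ G.Astar := Finset.mem_filter.mpr ⟨hab.1, hab.2⟩
  exact ⟨hξ.1.2.1 (a, b) hab.1, hξ.2 (a, b) hA⟩

lemma mem_pathGraph_astar {P : List ℕ} {h : P ≠ []} {p : ℕ × ℕ} :
    p ∈ (pathGraph P h).Astar ↔ p ∈ P.zip P.tail ∧ p.1 ≠ p.2 := by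
  simp only [Dgraph.Astar, pathGraph, Finset.mem_filter, List.mem_toFinset]

end Aux


theorem stmt_13 (n : ℕ) (T : Dgraph) (hT : MemR T) (hhT : T.height = n)
    (G : Dgraph) (hG : MemTaEq n G) (ρ : ℕ → ℕ) (hρ : ρ ∈ SHom G T) :
    SHom G T = JSet G T T (LSet G) ρ := by
  obtain ⟨hTa, hTrefl, -⟩ := hT
  obtain ⟨hGa, hGh, hGpath⟩ := hG
  have key : ∀ ξ ∈ SHom G T, ∀ P : List ℕ, G.IsPath P → P.length = n + 1 →
      ∀ x y, (x, y) ∈ P.zip P.tail → T.iota (ξ x) (ξ y) = 2 := by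
    intro ξ hξ P hP hlen x y hxy
    refine key_iota hTa hTrefl hhT ?_ (shom_map_chain' hξ hP)
      (by simp [hlen]) (zip_tail_map hxy)
    intro v hv
    obtain ⟨w, hw, rfl⟩ := List.mem_map.mp hv
    exact hξ.1.1 w (hP.2.2.1 w hw)
  ext ζ
  constructor
  · intro hζ
    refine ⟨hζ.1, ?_⟩
    rintro L ⟨P, hne, hP, hlenP, rfl⟩ p hp
    rw [mem_pathGraph_astar] at hp
    have hlen' : P.length = n + 1 := by rw [hlenP, hGh]
    rw [key ζ hζ P hP hlen' p.1 p.2 hp.1, key ρ hρ P hP hlen' p.1 p.2 hp.1]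
  · intro hζ
    obtain ⟨hζh, hζJ⟩ := hζ
    have himg : ∀ P : List ℕ, G.IsPath P → P.length = n + 1 →
        (P.map ζ).Chain' (dstar T) := by
      intro P hP hlen
      rw [List.chain'_map, chain'_iff_zip]
      intro x y hxy
      have hstar := chain'_iff_zip.mp (path_chain'_star hP) x y hxy
      have hiota : T.iota (ζ x) (ζ y) = T.iota (ρ x) (ρ y) := by
        refine hζJ (pathGraph P hP.1) ⟨P, hP.1, hP, by rw [hlen, hGh], rfl⟩ (x, y) ?_
        exact mem_pathGraph_astar.mpr ⟨hxy, hstar.2⟩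
      have h2 : T.iota (ρ x) (ρ y) = 2 := key ρ hρ P hP hlen x y hxy
      refine ⟨hζh.2.1 (x, y) hstar.1, ?_⟩
      intro heq
      rw [heq] at hiota
      have := iota_self_le hTa (ζ y)
      omega
    refine ⟨hζh, ?_⟩
    rintro ⟨v, w⟩ hvw
    rw [Dgraph.Astar, Finset.mem_filter] at hvw
    obtain ⟨hvwA, hvwne⟩ := hvw
    simp only [ne_eq] at hvwne ⊢
    have hvV : v ∈ G.V := (G.A_sub _ hvwA).1
    have hwV : w ∈ G.V := (G.A_sub _ hvwA).2
    obtain ⟨P, hP, hPlen, hvP⟩ := hGpath v hvV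
    obtain ⟨P', hP', hP'len, hwP'⟩ := hGpath w hwV
    obtain ⟨s, t, rfl⟩ := List.append_of_mem hvP
    obtain ⟨s', t', rfl⟩ := List.append_of_mem hwP'
    -- Step B : s.length + 1 ≤ s'.length
    have hPstar : ((s ++ [v]) ++ t).Chain' (dstar G) := by
      have := path_chain'_star hP
      simpa using this
    have hP'star : (s' ++ w :: t').Chain' (dstar G) := path_chain'_star hP'
    have hWc : ((s ++ [v]) ++ w :: t').Chain' (dstar G) := by
      rw [List.chain'_append]
      refine ⟨(List.chain'_append.mp hPstar).1, (List.chain'_append.mp hP'star).2.1, ?_⟩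
      intro x hx y hy
      simp only [List.getLast?_concat, Option.mem_some_iff] at hx
      simp only [List.head?_cons, Option.mem_some_iff] at hy
      subst hx; subst hy
      exact ⟨hvwA, hvwne⟩
    have hWV : ∀ u ∈ (s ++ [v]) ++ w :: t', u ∈ G.V := by
      intro u hu
      rcases List.mem_append.mp hu with h | h
      · refine hP.2.2.1 u ?_
        rcases List.mem_append.mp h with h | h
        · simp [h]
        · simp only [List.mem_singleton] at h
          simp [h]
      · refine hP'.2.2.1 u ?_
        simp only [List.mem_cons] at h
        rcases h with rfl | h
        · simp
        · simp [h]
    have hWle := walk_le hGa hWV hWc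
    rw [hGh] at hWle
    simp only [List.length_append, List.length_cons, List.length_singleton] at hWle hPlen hP'len
    -- Step C
    intro heq
    have hQ : ((s.map ζ ++ [ζ v]) ++ t.map ζ).Chain' (dstar T) := by
      have := himg (s ++ v :: t) hP (by simp; omega)
      simpa using this
    have hQ' : ((s'.map ζ ++ [ζ w]) ++ t'.map ζ).Chain' (dstar T) := by
      have := himg (s' ++ w :: t') hP' (by simp; omega)
      simpa using this
    obtain ⟨hQl, hQt, hQjun⟩ := List.chain'_append.mp hQ
    have hW'c : ((s'.map ζ ++ [ζ w]) ++ t.map ζ).Chain' (dstar T) := by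
      rw [List.chain'_append]
      refine ⟨(List.chain'_append.mp hQ').1, hQt, ?_⟩
      intro x hx y hy
      simp only [List.getLast?_concat, Option.mem_some_iff] at hx
      subst hx
      rw [← heq]
      exact hQjun (ζ v) (by simp [List.getLast?_concat]) y hy
    have hW'V : ∀ u ∈ (s'.map ζ ++ [ζ w]) ++ t.map ζ, u ∈ T.V := by
      intro u hu
      rcases List.mem_append.mp hu with h | h
      · rcases List.mem_append.mp h with h | h
        · obtain ⟨x, hx, rfl⟩ := List.mem_map.mp h
          exact hζh.1 x (hP'.2.2.1 x (by simp [hx]))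
        · simp only [List.mem_singleton] at h
          subst h
          exact hζh.1 w hwV
      · obtain ⟨x, hx, rfl⟩ := List.mem_map.mp h
        exact hζh.1 x (hP.2.2.1 x (by simp [hx]))
    have hW'le := walk_le hTa hW'V hW'c
    rw [hhT] at hW'le
    simp only [List.length_append, List.length_cons, List.length_singleton, List.length_map] at hW'le
    omega
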